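/- Let 0 < b_c < a_c and k₁, k₁* ∈ (−b_c², 0). Let P = (x₁, y₁, z₁) and Q = (x₂, y₂, z₂) satisfy x_i²/(a_c² + k₁) + y_i²/(b_c² + k₁) + z_i²/k₁ = 1 for i = 1, 2, together with the polar condition x₁x₂/(a_c² + k₁) + y₁y₂/(b_c² + k₁) + z₁z₂/k₁ = 1 (equivalently, the whole line through P and Q lies on the one-sheeted hyperboloid with parameter k₁). Let P*, Q* be the images of P, Q under the scaling γ(k₁, k₁*) : (x, y, z) ↦ (x√((a_c² + k₁*)/(a_c² + k₁)), y√((b_c² + k₁*)/(b_c² + k₁)), z√(k₁*/k₁)). Then ‖P* − Q*‖ = ‖P − Q‖. -/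

import Mathlib

set_option maxHeartbeats 1000000


/-- The axial scaling between two confocal one-sheeted hyperboloids preserves
the lengths of segments lying on generators: if `P, Q` lie on the hyperboloid
with parameter `k₁` and satisfy the polar condition (so the line `PQ` is a
generator), then `‖P* − Q*‖ = ‖P − Q‖`. -/
theorem stmt7 (ac bc k1 k1s : ℝ) (hbc : 0 < bc) (hba : bc < ac)
    (hk1 : k1 ∈ Set.Ioo (-bc ^ 2) 0) (hk1s : k1s ∈ Set.Ioo (-bc ^ 2) 0)
    (x1 y1 z1 x2 y2 z2 : ℝ)
    (hP : x1 ^ 2 / (ac ^ 2 + k1) + y1 ^ 2 / (bc ^ 2 + k1) + z1 ^ 2 / k1 = 1)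
    (hQ : x2 ^ 2 / (ac ^ 2 + k1) + y2 ^ 2 / (bc ^ 2 + k1) + z2 ^ 2 / k1 = 1)
    (hpolar : x1 * x2 / (ac ^ 2 + k1) + y1 * y2 / (bc ^ 2 + k1) +
      z1 * z2 / k1 = 1)
    (P Q Ps Qs : EuclideanSpace ℝ (Fin 3))
    (hPdef : P = ![x1, y1, z1]) (hQdef : Q = ![x2, y2, z2])
    (hPs : Ps = ![x1 * Real.sqrt ((ac ^ 2 + k1s) / (ac ^ 2 + k1)),
                  y1 * Real.sqrt ((bc ^ 2 + k1s) / (bc ^ 2 + k1)),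
                  z1 * Real.sqrt (k1s / k1)])
    (hQs : Qs = ![x2 * Real.sqrt ((ac ^ 2 + k1s) / (ac ^ 2 + k1)),
                  y2 * Real.sqrt ((bc ^ 2 + k1s) / (bc ^ 2 + k1)),
                  z2 * Real.sqrt (k1s / k1)]) :
    ‖Ps - Qs‖ = ‖P - Q‖ := by

  obtain ⟨hk1l, hk1u⟩ := hk1
  obtain ⟨hk1sl, hk1su⟩ := hk1s
  have hA : (0:ℝ) < ac ^ 2 + k1 := by nlinarith
  have hB : (0:ℝ) < bc ^ 2 + k1 := by nlinarith
  have hAs : (0:ℝ) < ac ^ 2 + k1s := by nlinarith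
  have hBs : (0:ℝ) < bc ^ 2 + k1s := by nlinarith
  have hk1ne : k1 ≠ 0 := ne_of_lt hk1u
  have hrA : (0:ℝ) ≤ (ac ^ 2 + k1s) / (ac ^ 2 + k1) := le_of_lt (div_pos hAs hA)
  have hrB : (0:ℝ) ≤ (bc ^ 2 + k1s) / (bc ^ 2 + k1) := le_of_lt (div_pos hBs hB)
  have hrC : (0:ℝ) ≤ k1s / k1 := le_of_lt (div_pos_of_neg_of_neg hk1su hk1u)
  have key : (x1 - x2) ^ 2 / (ac ^ 2 + k1) + (y1 - y2) ^ 2 / (bc ^ 2 + k1)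
      + (z1 - z2) ^ 2 / k1 = 0 := by
    linear_combination hP + hQ - 2 * hpolar
  have hsq : ‖Ps - Qs‖ ^ 2 = ‖P - Q‖ ^ 2 := by
    rw [← dist_eq_norm, ← dist_eq_norm,
      EuclideanSpace.dist_eq, EuclideanSpace.dist_eq, hPdef, hQdef, hPs, hQs]
    rw [Real.sq_sqrt (by positivity), Real.sq_sqrt (by positivity)]
    simp only [Fin.sum_univ_three, Matrix.cons_val_zero, Matrix.cons_val_one,
      Matrix.head_cons, Matrix.cons_val_two, Matrix.tail_cons,
      Real.dist_eq, sq_abs]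
    have e1 : (x1 * Real.sqrt ((ac ^ 2 + k1s) / (ac ^ 2 + k1))
        - x2 * Real.sqrt ((ac ^ 2 + k1s) / (ac ^ 2 + k1))) ^ 2
        = (x1 - x2) ^ 2 * ((ac ^ 2 + k1s) / (ac ^ 2 + k1)) := by
      rw [← sub_mul, mul_pow, Real.sq_sqrt hrA]
    have e2 : (y1 * Real.sqrt ((bc ^ 2 + k1s) / (bc ^ 2 + k1))
        - y2 * Real.sqrt ((bc ^ 2 + k1s) / (bc ^ 2 + k1))) ^ 2
        = (y1 - y2) ^ 2 * ((bc ^ 2 + k1s) / (bc ^ 2 + k1)) := by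
      rw [← sub_mul, mul_pow, Real.sq_sqrt hrB]
    have e3 : (z1 * Real.sqrt (k1s / k1) - z2 * Real.sqrt (k1s / k1)) ^ 2
        = (z1 - z2) ^ 2 * (k1s / k1) := by
      rw [← sub_mul, mul_pow, Real.sq_sqrt hrC]
    rw [e1, e2, e3]
    field_simp at key ⊢
    linear_combination (k1s - k1) * key
  rw [← Real.sqrt_sq (norm_nonneg (Ps - Qs)), ← Real.sqrt_sq (norm_nonneg (P - Q)), hsq]
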